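/- arXiv:1808.00231 — 3 statements merged into one kernel-verified Lean document; each statement's English description precedes it below -/
import Mathlib

section
/- Let g ≥ 1 and n ≥ 1 with (g,n) ≠ (1,1). The number of elliptic bridge types in T_{g,n} equals g·2^(n−1) − 1. Here the elliptic bridge types are: the singleton {irr} (present only when g ≥ 2), and the unordered pairs {[τ,I],[τ+1,I]} of classes in T_{g,n} with 0 ≤ τ ≤ g−1, I ⊆ [n], such that both (τ,I) and (τ+1,I) lie in {(τ',I') : 0 ≤ τ' ≤ g, I' ⊆ [n]} ∖ {(0,∅),(g,[n])} and neither class equals [1,∅]. -/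
open Finset

namespace CTV

/-- Pairs `(τ, I)` with `τ : ℕ` and `I ⊆ [n]`. -/
abbrev Pr (n : ℕ) := ℕ × Finset (Fin n)

/-- The involution `σ(τ,I) = (g - τ, [n] \ I)`. -/
def sigmaP (g : ℕ) {n : ℕ} (p : Pr n) : Pr n := (g - p.1, p.2ᶜ)

/-- The set `S = {(τ,I) : 0 ≤ τ ≤ g, I ⊆ [n]} \ {(0,∅),(g,[n])}`. -/
def SSet (g n : ℕ) : Set (Pr n) :=
  {p | p.1 ≤ g ∧ p ≠ (0, (∅ : Finset (Fin n))) ∧ p ≠ (g, (Finset.univ : Finset (Fin n)))}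

/-- `SSet g n` as a finite set. -/
def SFin (g n : ℕ) : Finset (Pr n) :=
  (Finset.range (g + 1) ×ˢ (Finset.univ : Finset (Finset (Fin n)))).filter
    fun p => p ≠ (0, (∅ : Finset (Fin n))) ∧ p ≠ (g, (Finset.univ : Finset (Fin n)))

/-- A class of `T*_{g,n}` is represented by the σ-orbit `{p, σ p}`. -/
abbrev ClassRep (n : ℕ) := Finset (Pr n)

/-- The class `[τ, I]`, encoded as the orbit `{(τ,I), σ(τ,I)}`. -/
def cls (g : ℕ) {n : ℕ} (p : Pr n) : ClassRep n := {p, sigmaP g p}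

/-- `(τ+1, I)`. -/
def succP {n : ℕ} (p : Pr n) : Pr n := (p.1 + 1, p.2)

/-- The class `[1, ∅]`. -/
def clsOne (g n : ℕ) : ClassRep n := cls g (1, (∅ : Finset (Fin n)))

/-- The set `T_{g,n} = {irr} ∪ T*_{g,n}`, with `irr = none`. -/
def TgnSet (g n : ℕ) : Set (Option (ClassRep n)) :=
  {x | x = none ∨ ∃ p ∈ SSet g n, x = some (cls g p)}

/-- `(τ,I)` represents an adjacent pair of classes `{[τ,I],[τ+1,I]}`, both in `T*` and
neither equal to `[1,∅]`. -/
def ValidPair (g n : ℕ) (p : Pr n) : Prop :=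
  p ∈ SSet g n ∧ succP p ∈ SSet g n ∧ cls g p ≠ clsOne g n ∧ cls g (succP p) ≠ clsOne g n

/-- Two classes are neighbors if they admit representatives in `S` of the form
`(τ,I)` and `(τ±1,I)`. -/
def Nbr (g n : ℕ) (c d : ClassRep n) : Prop :=
  ∃ p ∈ SSet g n, ∃ q ∈ SSet g n,
    cls g p = c ∧ cls g q = d ∧ (q.1 = p.1 + 1 ∨ p.1 = q.1 + 1) ∧ q.2 = p.2

/-- `T ⊆ T_{g,n}` is admissible if `[1,∅] ∉ T`, `irr ∉ T` when `g = 1`, and every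
class in `T` has a neighbor in `T`. -/
def Admissible (g n : ℕ) (T : Set (Option (ClassRep n))) : Prop :=
  some (clsOne g n) ∉ T ∧ (g = 1 → none ∉ T) ∧
    ∀ c : ClassRep n, some c ∈ T → ∃ d : ClassRep n, some d ∈ T ∧ Nbr g n c d

/-- `T̃ := T \ {[1,∅]}` if `g ≥ 2`, and `T \ {[1,∅], irr}` if `g ≤ 1`. -/
def Ttil (g n : ℕ) (T : Set (Option (ClassRep n))) : Set (Option (ClassRep n)) :=
  if g ≤ 1 then T \ {some (clsOne g n), none} else T \ {some (clsOne g n)}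

/-- `T^adm`: remove from `T̃` all classes with no neighbor in `T̃`. -/
def Tadm (g n : ℕ) (T : Set (Option (ClassRep n))) : Set (Option (ClassRep n)) :=
  {x | x ∈ Ttil g n T ∧ ∀ c : ClassRep n, x = some c →
    ∃ d : ClassRep n, some d ∈ Ttil g n T ∧ Nbr g n c d}

/-- Minimal subsets of `T_{g,n}`: `{irr}` when `g ≥ 2`, and adjacent pairs
`{[τ,I],[τ+1,I]}` avoiding `[1,∅]`. -/
def IsMinimal (g n : ℕ) (M : Set (Option (ClassRep n))) : Prop :=
  (2 ≤ g ∧ M = {(none : Option (ClassRep n))}) ∨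
    ∃ p : Pr n, ValidPair g n p ∧ M = {some (cls g p), some (cls g (succP p))}

/-- Representatives `(τ,I)`, `0 ≤ τ ≤ g-1`, of adjacent pairs of classes
`{[τ,I],[τ+1,I]}` with both `(τ,I)` and `(τ+1,I)` in `S` and neither class `[1,∅]`. -/
def pairsFin (g n : ℕ) : Finset (Pr n) :=
  (Finset.range g ×ˢ (Finset.univ : Finset (Finset (Fin n)))).filter
    fun p => p ∈ SFin g n ∧ succP p ∈ SFin g n ∧
      cls g p ≠ clsOne g n ∧ cls g (succP p) ≠ clsOne g n

/-- The finite set of elliptic bridge types: the singleton `{irr}` (only when `g ≥ 2`)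
together with all unordered pairs `{[τ,I],[τ+1,I]}` as above, as subsets of
`T_{g,n} = {irr} ∪ T*_{g,n}`. -/
def EBFin (g n : ℕ) : Finset (Finset (Option (ClassRep n))) :=
  (if 2 ≤ g then ({({none} : Finset (Option (ClassRep n)))} : Finset (Finset (Option (ClassRep n)))) else ∅) ∪
    (pairsFin g n).image
      (fun p => ({some (cls g p), some (cls g (succP p))} : Finset (Option (ClassRep n))))

section Aux

variable {n : ℕ}

lemma pair_eq_pair {α : Type*} [DecidableEq α] {a b c d : α}
    (h : ({a, b} : Finset α) = {c, d}) : (a = c ∧ b = d) ∨ (a = d ∧ b = c) := by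
  have := Finset.coe_inj.mpr h
  simp only [Finset.coe_insert, Finset.coe_singleton] at this
  exact Set.pair_eq_pair_iff.mp this

lemma compl_ne (hn : 1 ≤ n) (I : Finset (Fin n)) : Iᶜ ≠ I := by
  intro h
  by_cases hmem : (⟨0, hn⟩ : Fin n) ∈ I
  · have h2 : (⟨0, hn⟩ : Fin n) ∈ Iᶜ := h.symm ▸ hmem
    exact (Finset.mem_compl.mp h2) hmem
  · have h2 : (⟨0, hn⟩ : Fin n) ∈ Iᶜ := Finset.mem_compl.mpr hmem
    exact hmem (h ▸ h2)

lemma empty_ne_univ (hn : 1 ≤ n) : (∅ : Finset (Fin n)) ≠ Finset.univ := by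
  intro h
  have := Finset.mem_univ (⟨0, hn⟩ : Fin n)
  rw [← h] at this
  exact absurd this (Finset.notMem_empty _)

lemma cls_eq {g : ℕ} {p q : Pr n} (h : cls g p = cls g q) : q = p ∨ q = sigmaP g p := by
  rcases pair_eq_pair h with ⟨h1, _⟩ | ⟨_, h2⟩
  · exact Or.inl h1.symm
  · exact Or.inr h2.symm

lemma sigma_sigma {g : ℕ} {p : Pr n} (hp : p.1 ≤ g) : sigmaP g (sigmaP g p) = p := by
  simp [sigmaP, Nat.sub_sub_self hp]

lemma cls_sigma {g : ℕ} {p : Pr n} (hp : p.1 ≤ g) : cls g (sigmaP g p) = cls g p := by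
  unfold cls
  rw [sigma_sigma hp, Finset.pair_comm]

lemma clsOne_iff {g : ℕ} (hg : 1 ≤ g) (p : Pr n) :
    cls g p = clsOne g n ↔
      p = (1, (∅ : Finset (Fin n))) ∨ p = (g - 1, (Finset.univ : Finset (Fin n))) := by
  have hsig : sigmaP g (1, (∅ : Finset (Fin n))) = (g - 1, (Finset.univ : Finset (Fin n))) := by
    simp [sigmaP]
  constructor
  · intro h
    rcases cls_eq (h.symm : cls g (1, (∅ : Finset (Fin n))) = cls g p) with h1 | h1
    · exact Or.inl h1
    · exact Or.inr (h1.trans hsig)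
  · rintro (rfl | rfl)
    · rfl
    · rw [← hsig]
      exact cls_sigma (by simpa using hg)

/-- The pairing involution. -/
def iotaP (g : ℕ) (p : Pr n) : Pr n := (g - 1 - p.1, p.2ᶜ)

lemma iota_eq_sigma_succ {g : ℕ} (p : Pr n) : iotaP g p = sigmaP g (succP p) := by
  simp only [iotaP, sigmaP, succP, Prod.mk.injEq, and_true]
  omega

lemma succ_iota {g : ℕ} {p : Pr n} (hp : p.1 < g) : succP (iotaP g p) = sigmaP g p := by
  simp only [iotaP, sigmaP, succP, Prod.mk.injEq, and_true]
  omega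

lemma cls_iota {g : ℕ} {p : Pr n} (hp : p.1 < g) : cls g (iotaP g p) = cls g (succP p) := by
  rw [iota_eq_sigma_succ]
  exact cls_sigma (by simp only [succP]; omega)

lemma cls_succ_iota {g : ℕ} {p : Pr n} (hp : p.1 < g) : cls g (succP (iotaP g p)) = cls g p := by
  rw [succ_iota hp]
  exact cls_sigma (le_of_lt hp)

lemma mem_SFin {g : ℕ} {p : Pr n} :
    p ∈ SFin g n ↔ p.1 ≤ g ∧ ¬(p.1 = 0 ∧ p.2 = ∅) ∧ ¬(p.1 = g ∧ p.2 = Finset.univ) := by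
  simp [SFin, Nat.lt_succ_iff, Prod.ext_iff, not_and]

lemma mem_pairsFin {g : ℕ} {p : Pr n} :
    p ∈ pairsFin g n ↔ p.1 < g ∧ p ∈ SFin g n ∧ succP p ∈ SFin g n ∧
      cls g p ≠ clsOne g n ∧ cls g (succP p) ≠ clsOne g n := by
  simp [pairsFin, Finset.mem_filter, Finset.mem_product, and_assoc]

lemma iota_mem {g : ℕ} (hg : 1 ≤ g) (hn : 1 ≤ n) {p : Pr n} (hmem : p ∈ pairsFin g n) :
    iotaP g p ∈ pairsFin g n := by
  rw [mem_pairsFin] at hmem ⊢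
  obtain ⟨hp, hS, hS', h1, h2⟩ := hmem
  rw [mem_SFin] at hS hS'
  simp only [succP] at hS'
  refine ⟨by simp only [iotaP]; omega, ?_, ?_, ?_, ?_⟩
  · rw [mem_SFin]
    refine ⟨by simp only [iotaP]; omega, ?_, ?_⟩
    · rintro ⟨ha, hb⟩
      simp only [iotaP] at ha hb
      have hIu : p.2 = Finset.univ := by
        rw [← compl_compl p.2, hb, Finset.compl_empty]
      exact hS'.2.2 ⟨by omega, hIu⟩
    · rintro ⟨ha, _⟩
      simp only [iotaP] at ha
      omega
  · rw [succ_iota hp, mem_SFin]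
    refine ⟨by simp only [sigmaP]; omega, ?_, ?_⟩
    · rintro ⟨ha, _⟩
      simp only [sigmaP] at ha
      omega
    · rintro ⟨ha, hb⟩
      simp only [sigmaP] at ha hb
      have hI0 : p.2 = ∅ := by
        rw [← compl_compl p.2, hb, Finset.compl_univ]
      exact hS.2.1 ⟨by omega, hI0⟩
  · rw [cls_iota hp]; exact h2
  · rw [cls_succ_iota hp]; exact h1

lemma iota_ne (hn : 1 ≤ n) {g : ℕ} (p : Pr n) : iotaP g p ≠ p := by
  intro h
  exact compl_ne hn p.2 (congrArg Prod.snd h)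

lemma fiber_eq {g : ℕ} (hn : 1 ≤ n) {p q : Pr n} (hp : p.1 < g)
    (h : ({some (cls g q), some (cls g (succP q))} : Finset (Option (ClassRep n)))
       = {some (cls g p), some (cls g (succP p))}) : q = p ∨ q = iotaP g p := by
  rcases pair_eq_pair h with ⟨h1, h2⟩ | ⟨h1, h2⟩
  · -- cls q = cls p, cls succ q = cls succ p
    have c1 : cls g q = cls g p := Option.some.inj h1
    have c2 : cls g (succP q) = cls g (succP p) := Option.some.inj h2
    rcases cls_eq c1.symm with hq | hq
    · exact Or.inl hq
    · subst hq
      rcases cls_eq c2.symm with hq | hq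
      · exfalso
        simp only [succP, sigmaP, Prod.mk.injEq] at hq
        exact compl_ne hn p.2 hq.2
      · exfalso
        simp only [succP, sigmaP, Prod.mk.injEq] at hq
        omega
  · -- cls q = cls succ p, cls succ q = cls p
    have c1 : cls g q = cls g (succP p) := Option.some.inj h1
    have c2 : cls g (succP q) = cls g p := Option.some.inj h2
    rcases cls_eq c1.symm with hq | hq
    · subst hq
      rcases cls_eq c2 with hq | hq
      · exfalso
        have := congrArg Prod.fst hq
        simp only [succP] at this
        omega
      · exfalso
        have := congrArg Prod.snd hq
        simp only [succP, sigmaP] at this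
        exact compl_ne hn p.2 this.symm
    · right
      rw [hq, ← iota_eq_sigma_succ]

end Aux
section Count

variable {n : ℕ}

/-- Excluded representatives. -/
def Bad (g n : ℕ) : Finset (Pr n) :=
  if g = 1 then {(0, (∅ : Finset (Fin n))), (0, Finset.univ)}
  else {(0, (∅ : Finset (Fin n))), (1, (∅ : Finset (Fin n))),
        ((g - 2 : ℕ), (Finset.univ : Finset (Fin n))), ((g - 1 : ℕ), (Finset.univ : Finset (Fin n)))}

lemma pairsFin_eq (g : ℕ) (hg : 1 ≤ g) (hn : 1 ≤ n) :
    pairsFin g n = (Finset.range g ×ˢ (Finset.univ : Finset (Finset (Fin n)))) \ Bad g n := by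
  have hne := empty_ne_univ hn
  ext p
  obtain ⟨t, I⟩ := p
  simp only [mem_pairsFin, mem_SFin, Finset.mem_sdiff, Finset.mem_product, Finset.mem_range,
    Finset.mem_univ, and_true, true_and, succP, Ne, clsOne_iff hg, Bad, Prod.mk.injEq, not_or]
  rcases eq_or_ne g 1 with rfl | h1
  · rw [if_pos rfl]
    simp only [Finset.mem_insert, Finset.mem_singleton, Prod.mk.injEq, not_or]
    by_cases h0 : I = (∅ : Finset (Fin n)) <;> by_cases hu : I = (Finset.univ : Finset (Fin n))
    · exact absurd (h0.symm.trans hu) hne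
    · subst h0
      simp only [hne, and_true, and_false, true_and, not_false_iff]
      try omega
    · subst hu
      simp only [Ne.symm hne, hne, and_false, and_true, true_and, not_false_iff]
      try omega
    · simp only [h0, hu, and_false, and_true, true_and, not_false_iff]
      try omega
  · rw [if_neg h1]
    simp only [Finset.mem_insert, Finset.mem_singleton, Prod.mk.injEq, not_or]
    by_cases h0 : I = (∅ : Finset (Fin n)) <;> by_cases hu : I = (Finset.univ : Finset (Fin n))
    · exact absurd (h0.symm.trans hu) hne
    · subst h0
      simp only [hne, and_true, and_false, true_and, not_false_iff]
      try omega
    · subst hu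
      simp only [Ne.symm hne, hne, and_false, and_true, true_and, not_false_iff]
      try omega
    · simp only [h0, hu, and_false, and_true, true_and, not_false_iff]
      try omega

lemma Bad_subset (g : ℕ) (hg : 1 ≤ g) :
    Bad g n ⊆ Finset.range g ×ˢ (Finset.univ : Finset (Finset (Fin n))) := by
  intro p hp
  simp only [Bad] at hp
  split_ifs at hp with h
  · subst h
    simp only [Finset.mem_insert, Finset.mem_singleton] at hp
    rcases hp with rfl | rfl <;> simp [Finset.mem_product]
  · simp only [Finset.mem_insert, Finset.mem_singleton] at hp
    rcases hp with rfl | rfl | rfl | rfl <;> simp [Finset.mem_product] <;> omega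

lemma Bad_card_one (hn : 1 ≤ n) : (Bad 1 n).card = 2 := by
  have hne := empty_ne_univ hn
  rw [Bad, if_pos rfl, Finset.card_pair (by simp [Prod.ext_iff, hne])]

lemma Bad_card (g : ℕ) (hg2 : 2 ≤ g) (hn : 1 ≤ n) : (Bad g n).card = 4 := by
  have hne := empty_ne_univ hn
  rw [Bad, if_neg (by omega : ¬ g = 1)]
  rw [Finset.card_insert_of_notMem (by simp [Prod.ext_iff, hne]),
      Finset.card_insert_of_notMem (by simp [Prod.ext_iff, hne]),
      Finset.card_pair (by simp [Prod.ext_iff]; omega)]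

lemma pairsFin_card (g : ℕ) (hg : 1 ≤ g) (hn : 1 ≤ n) :
    (pairsFin g n).card = g * 2 ^ n - (Bad g n).card := by
  rw [pairsFin_eq g hg hn, Finset.card_sdiff_of_subset (Bad_subset g hg)]
  congr 1
  rw [Finset.card_product, Finset.card_range, Finset.card_univ, Fintype.card_finset,
    Fintype.card_fin]

lemma two_mul_card_image (g : ℕ) (hg : 1 ≤ g) (hn : 1 ≤ n) :
    2 * ((pairsFin g n).image
      (fun p => ({some (cls g p), some (cls g (succP p))} : Finset (Option (ClassRep n))))).card
      = (pairsFin g n).card := by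
  classical
  set f : Pr n → Finset (Option (ClassRep n)) :=
    fun p => ({some (cls g p), some (cls g (succP p))} : Finset (Option (ClassRep n))) with hf
  have key : ∀ b ∈ (pairsFin g n).image f,
      ((pairsFin g n).filter (fun q => f q = b)).card = 2 := by
    intro b hb
    obtain ⟨p, hp, rfl⟩ := Finset.mem_image.mp hb
    have hp1 : p.1 < g := (mem_pairsFin.mp hp).1
    have hfil : (pairsFin g n).filter (fun q => f q = f p) = {p, iotaP g p} := by
      ext q
      simp only [Finset.mem_filter, Finset.mem_insert, Finset.mem_singleton]
      constructor
      · rintro ⟨hq, hfq⟩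
        simp only [hf] at hfq
        exact fiber_eq hn hp1 hfq
      · rintro (rfl | rfl)
        · exact ⟨hp, rfl⟩
        · refine ⟨iota_mem hg hn hp, ?_⟩
          show f (iotaP g p) = f p
          simp only [hf]
          rw [cls_iota hp1, cls_succ_iota hp1, Finset.pair_comm]
    rw [hfil, Finset.card_pair (Ne.symm (iota_ne hn p))]
  rw [Finset.card_eq_sum_card_fiberwise (fun x hx => Finset.mem_image_of_mem f hx),
    Finset.sum_congr rfl key, Finset.sum_const, smul_eq_mul]
  exact mul_comm 2 _

end Count
/-- For `g ≥ 1`, `n ≥ 1`, `(g,n) ≠ (1,1)`, the number of elliptic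
bridge types in `T_{g,n}` equals `g·2^(n-1) - 1`. -/
theorem stmt3 (g n : ℕ) (hg : 1 ≤ g) (hn : 1 ≤ n) (hne : (g, n) ≠ (1, 1)) :
    (EBFin g n).card = g * 2 ^ (n - 1) - 1 := by
  classical
  have hK : 1 ≤ 2 ^ (n - 1) := Nat.one_le_two_pow
  have h2n : (2 : ℕ) ^ n = 2 * 2 ^ (n - 1) := by
    conv_lhs => rw [show n = (n - 1) + 1 by omega]
    rw [pow_succ]
    ring
  have htm := two_mul_card_image g hg hn
  have hpc := pairsFin_card g hg hn
  rcases eq_or_ne g 1 with rfl | hg1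
  · rw [EBFin, if_neg (by omega), Finset.empty_union]
    have hbc := Bad_card_one hn
    omega
  · have hg2 : 2 ≤ g := by omega
    have hbc := Bad_card g hg2 hn
    have hdisj : Disjoint ({({none} : Finset (Option (ClassRep n)))} :
        Finset (Finset (Option (ClassRep n))))
        ((pairsFin g n).image
          (fun p => ({some (cls g p), some (cls g (succP p))} :
            Finset (Option (ClassRep n))))) := by
      rw [Finset.disjoint_singleton_left]
      intro hmem
      obtain ⟨p, hp, heq⟩ := Finset.mem_image.mp hmem
      have : some (cls g p) ∈ ({none} : Finset (Option (ClassRep n))) :=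
        heq ▸ Finset.mem_insert_self _ _
      simp at this
    rw [EBFin, if_pos hg2, Finset.card_union_of_disjoint hdisj, Finset.card_singleton]
    have hgm : g * 2 ^ n = 2 * (g * 2 ^ (n - 1)) := by rw [h2n]; ring
    have hm : 2 ≤ g * 2 ^ (n - 1) := by
      calc 2 = 2 * 1 := by norm_num
      _ ≤ g * 2 ^ (n - 1) := Nat.mul_le_mul hg2 hK
    omega

end CTV
end

section
/- For subsets T, S ⊆ T_{g,n}, every minimal subset of T_{g,n} contained in T is also contained in S if and only if T^adm ⊆ S^adm. In particular the set of minimal subsets contained in T coincides with the set of minimal subsets contained in S if and only if T^adm = S^adm. -/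
open Finset

namespace CTV

lemma ttil_subset (g n : ℕ) (T : Set (Option (ClassRep n))) : Ttil g n T ⊆ T := by
  unfold Ttil; split <;> exact Set.diff_subset

lemma mem_ttil_some {g n : ℕ} {T : Set (Option (ClassRep n))} {c : ClassRep n} :
    some c ∈ Ttil g n T ↔ some c ∈ T ∧ c ≠ clsOne g n := by
  by_cases h : g ≤ 1 <;> simp [Ttil, h, Set.mem_diff]

lemma none_mem_ttil {g n : ℕ} {T : Set (Option (ClassRep n))} :
    (none : Option (ClassRep n)) ∈ Ttil g n T ↔ none ∈ T ∧ ¬ g ≤ 1 := by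
  by_cases h : g ≤ 1 <;> simp [Ttil, h, Set.mem_diff]

lemma minimal_subset_tadm {g n : ℕ} {T M : Set (Option (ClassRep n))}
    (hM : IsMinimal g n M) (hMT : M ⊆ T) : M ⊆ Tadm g n T := by
  rcases hM with ⟨hg, rfl⟩ | ⟨p, ⟨hp1, hp2, hne1, hne2⟩, rfl⟩
  · intro x hx
    rcases hx with rfl
    refine ⟨none_mem_ttil.mpr ⟨hMT rfl, by omega⟩, ?_⟩
    intro c hc; cases hc
  · have hmem1 : some (cls g p) ∈ T := hMT (Or.inl rfl)
    have hmem2 : some (cls g (succP p)) ∈ T := hMT (Or.inr rfl)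
    have ht1 : some (cls g p) ∈ Ttil g n T := mem_ttil_some.mpr ⟨hmem1, hne1⟩
    have ht2 : some (cls g (succP p)) ∈ Ttil g n T := mem_ttil_some.mpr ⟨hmem2, hne2⟩
    have nbr1 : Nbr g n (cls g p) (cls g (succP p)) :=
      ⟨p, hp1, succP p, hp2, rfl, rfl, Or.inl rfl, rfl⟩
    have nbr2 : Nbr g n (cls g (succP p)) (cls g p) :=
      ⟨succP p, hp2, p, hp1, rfl, rfl, Or.inr rfl, rfl⟩
    intro x hx
    rcases hx with rfl | rfl
    · exact ⟨ht1, fun c hc => by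
        cases hc; exact ⟨cls g (succP p), ht2, nbr1⟩⟩
    · exact ⟨ht2, fun c hc => by
        cases hc; exact ⟨cls g p, ht1, nbr2⟩⟩

lemma tadm_exists_minimal {g n : ℕ} {T : Set (Option (ClassRep n))}
    {x : Option (ClassRep n)} (hx : x ∈ Tadm g n T) :
    ∃ M, IsMinimal g n M ∧ x ∈ M ∧ M ⊆ T := by
  obtain ⟨hx1, hx2⟩ := hx
  match x with
  | none =>
    have h := none_mem_ttil.mp hx1
    refine ⟨{none}, Or.inl ⟨by omega, rfl⟩, rfl, ?_⟩
    intro y hy; rcases hy; exact h.1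
  | some c =>
    obtain ⟨hcT, hcne⟩ := mem_ttil_some.mp hx1
    obtain ⟨d, hd, p, hpS, q, hqS, hcp, hcq, hor, hI⟩ := hx2 c rfl
    obtain ⟨hdT, hdne⟩ := mem_ttil_some.mp hd
    rcases hor with h | h
    · have hq : q = succP p := Prod.ext_iff.mpr ⟨h, hI⟩
      subst hq
      refine ⟨{some (cls g p), some (cls g (succP p))},
        Or.inr ⟨p, ⟨hpS, hqS, by rw [hcp]; exact hcne, by rw [hcq]; exact hdne⟩, rfl⟩,
        Or.inl (by rw [hcp]), ?_⟩
      intro y hy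
      rcases hy with rfl | rfl
      · rw [hcp]; exact hcT
      · rw [hcq]; exact hdT
    · have hp : p = succP q := Prod.ext_iff.mpr ⟨h, hI.symm⟩
      subst hp
      refine ⟨{some (cls g q), some (cls g (succP q))},
        Or.inr ⟨q, ⟨hqS, hpS, by rw [hcq]; exact hdne, by rw [hcp]; exact hcne⟩, rfl⟩,
        Or.inr (by rw [hcp]; rfl), ?_⟩
      intro y hy
      rcases hy with rfl | rfl
      · rw [hcq]; exact hdT
      · rw [hcp]; exact hcT

lemma key (g n : ℕ) (T S : Set (Option (ClassRep n))) :
    (∀ M : Set (Option (ClassRep n)), IsMinimal g n M → M ⊆ T → M ⊆ S) ↔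
      Tadm g n T ⊆ Tadm g n S := by
  constructor
  · intro h x hx
    obtain ⟨M, hM, hxM, hMT⟩ := tadm_exists_minimal hx
    exact minimal_subset_tadm hM (h M hM hMT) hxM
  · intro h M hM hMT x hx
    exact ttil_subset g n S (h (minimal_subset_tadm hM hMT hx)).1

/-- For `T, S ⊆ T_{g,n}`: every minimal subset of `T_{g,n}` contained
in `T` is contained in `S` iff `T^adm ⊆ S^adm`; and the collections of minimal subsets
contained in `T` and in `S` coincide iff `T^adm = S^adm`. -/
theorem stmt10 (g n : ℕ) (T S : Set (Option (ClassRep n)))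
    (hT : T ⊆ TgnSet g n) (hS : S ⊆ TgnSet g n) :
    ((∀ M : Set (Option (ClassRep n)), IsMinimal g n M → M ⊆ T → M ⊆ S) ↔
        Tadm g n T ⊆ Tadm g n S) ∧
      ({M : Set (Option (ClassRep n)) | IsMinimal g n M ∧ M ⊆ T} =
          {M : Set (Option (ClassRep n)) | IsMinimal g n M ∧ M ⊆ S} ↔
        Tadm g n T = Tadm g n S) := by
  refine ⟨key g n T S, ?_⟩
  constructor
  · intro h
    apply Set.Subset.antisymm
    · exact (key g n T S).mp fun M hM hMT => ((Set.ext_iff.mp h M).mp ⟨hM, hMT⟩).2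
    · exact (key g n S T).mp fun M hM hMS => ((Set.ext_iff.mp h M).mpr ⟨hM, hMS⟩).2
  · intro h
    ext M
    simp only [Set.mem_setOf_eq]
    constructor
    · rintro ⟨hM, hMT⟩
      exact ⟨hM, (key g n T S).mpr h.le M hM hMT⟩
    · rintro ⟨hM, hMS⟩
      exact ⟨hM, (key g n S T).mpr h.ge M hM hMS⟩

end CTV
end

section
/- Suppose g ≥ 3. The subspace of T-compatible vectors in the Q-vector space V (with basis {λ, δ_irr} ∪ {δ_{i,I} : [i,I] ∈ T*_{g,n} ∖ {[1,∅]}}), i.e. the common kernel of the elliptic bridge functionals c_t for all elliptic bridge types t contained in T, has codimension in V equal to the number of minimal subsets of T_{g,n} contained in T. -/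
open Finset

namespace CTV

/-- Basis index for the ℚ-vector space `V` with basis `{λ, δ_irr} ∪ {δ_{i,I}}`:
`Sum.inl () = λ`, `Sum.inr (Sum.inl ()) = δ_irr`, `Sum.inr (Sum.inr c) = δ_c`. -/
abbrev BIdx (n : ℕ) := Unit ⊕ Unit ⊕ ClassRep n

/-- The ℚ-vector space `V`. -/
abbrev Vsp (n : ℕ) := BIdx n → ℚ

def lamIdx (n : ℕ) : BIdx n := Sum.inl ()
def irrIdx (n : ℕ) : BIdx n := Sum.inr (Sum.inl ())
def clsIdx {n : ℕ} (c : ClassRep n) : BIdx n := Sum.inr (Sum.inr c)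

/-- Coordinate projection as a linear functional on `V`. -/
def pr {n : ℕ} (i : BIdx n) : Vsp n →ₗ[ℚ] ℚ := LinearMap.proj i

/-- The elliptic bridge functional `c_irr(L) = a + 10·b_irr`. -/
def cIrrF (n : ℕ) : Vsp n →ₗ[ℚ] ℚ := pr (lamIdx n) + (10 : ℚ) • pr (irrIdx n)

/-- The elliptic bridge functional
`c_{[τ,I],[τ+1,I]}(L) = a + 12·b_irr - b_{τ,I} - b_{τ+1,I}`. -/
def cPairF (g n : ℕ) (p : Pr n) : Vsp n →ₗ[ℚ] ℚ :=
  pr (lamIdx n) + (12 : ℚ) • pr (irrIdx n)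
    - pr (clsIdx (cls g p)) - pr (clsIdx (cls g (succP p)))
/-- The set of elliptic bridge functionals attached to the bridge types contained
in `T`. -/
def FT (g n : ℕ) (T : Set (Option (ClassRep n))) : Set (Vsp n →ₗ[ℚ] ℚ) :=
  {φ | ((2 ≤ g ∧ Option.none ∈ T) ∧ φ = cIrrF n) ∨
    ∃ p : Pr n, ValidPair g n p ∧ some (cls g p) ∈ T ∧
      some (cls g (succP p)) ∈ T ∧ φ = cPairF g n p}

section Aux

open Classical in
/-- Key classification of equality of classes. -/
lemma cls_eq_iff (g : ℕ) {n : ℕ} {τ e : ℕ} {I J : Finset (Fin n)} (hτ : τ ≤ g) (he : e ≤ g) :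
    cls g (τ, I) = cls g (e, J) ↔ (τ = e ∧ I = J) ∨ (τ = g - e ∧ I = Jᶜ) := by
  unfold cls sigmaP
  rw [← Finset.coe_inj]
  simp only [Finset.coe_insert, Finset.coe_singleton]
  rw [Set.pair_eq_pair_iff]
  simp only [Prod.mk.injEq]
  constructor
  · rintro (⟨⟨h1, h2⟩, _⟩ | ⟨⟨h1, h2⟩, _⟩)
    · exact Or.inl ⟨h1, h2⟩
    · exact Or.inr ⟨h1, h2⟩
  · rintro (⟨rfl, rfl⟩ | ⟨rfl, rfl⟩)
    · exact Or.inl ⟨⟨rfl, rfl⟩, ⟨rfl, rfl⟩⟩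
    · exact Or.inr ⟨⟨rfl, rfl⟩, ⟨by omega, compl_compl J⟩⟩

/-- basis vector of `V`. -/
noncomputable def bv {n : ℕ} (i : BIdx n) : Vsp n := Pi.single i 1

lemma pr_bv {n : ℕ} (i j : BIdx n) : pr i (bv j) = if i = j then (1 : ℚ) else 0 := by
  classical
  simp [pr, bv, Pi.single_apply]

lemma cPairF_bv_irr (g n : ℕ) (p : Pr n) : cPairF g n p (bv (irrIdx n)) = 12 := by
  simp [cPairF, pr_bv, lamIdx, irrIdx, clsIdx]

lemma cIrrF_bv_irr (n : ℕ) : cIrrF n (bv (irrIdx n)) = 10 := by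
  simp [cIrrF, pr_bv, lamIdx, irrIdx]

lemma cPairF_ne_cIrrF (g n : ℕ) (p : Pr n) : cPairF g n p ≠ cIrrF n := by
  intro h
  have h1 := cPairF_bv_irr g n p
  rw [h, cIrrF_bv_irr] at h1
  norm_num at h1

lemma cPairF_bv_cls (g n : ℕ) (p : Pr n) (c : ClassRep n) :
    cPairF g n p (bv (clsIdx c)) =
      -((if cls g p = c then (1 : ℚ) else 0) + (if cls g (succP p) = c then (1 : ℚ) else 0)) := by
  classical
  simp only [cPairF, LinearMap.sub_apply, LinearMap.add_apply, LinearMap.smul_apply, pr_bv]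
  have h1 : (lamIdx n = clsIdx c) = False := by simp [lamIdx, clsIdx]
  have h2 : (irrIdx n = clsIdx c) = False := by simp [irrIdx, clsIdx]
  have h3 : ∀ d : ClassRep n, (clsIdx d = clsIdx c) = (d = c) := by
    intro d; simp [clsIdx]
  simp only [h1, h2, h3, if_false, smul_zero, zero_add]
  ring

lemma cPairF_eq_iff (g n : ℕ) (p q : Pr n) :
    cPairF g n p = cPairF g n q ↔
      ({cls g p, cls g (succP p)} : Finset (ClassRep n)) = {cls g q, cls g (succP q)} := by
  classical
  constructor
  · intro h
    have key : ∀ c : ClassRep n, (cls g p = c ∨ cls g (succP p) = c) ↔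
        (cls g q = c ∨ cls g (succP q) = c) := by
      intro c
      have h2 := congrArg (fun φ : Vsp n →ₗ[ℚ] ℚ => φ (bv (clsIdx c))) h
      simp only [cPairF_bv_cls] at h2
      constructor
      · intro h3
        by_contra h4
        push_neg at h4
        rw [if_neg h4.1, if_neg h4.2] at h2
        rcases h3 with h3 | h3 <;> rw [if_pos h3] at h2 <;> split_ifs at h2 <;> norm_num at h2
      · intro h3
        by_contra h4
        push_neg at h4
        rw [if_neg h4.1, if_neg h4.2] at h2
        rcases h3 with h3 | h3 <;> rw [if_pos h3] at h2 <;> split_ifs at h2 <;> norm_num at h2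
    ext c
    simp only [Finset.mem_insert, Finset.mem_singleton]
    constructor
    · rintro (rfl | rfl)
      · rcases (key _).mp (Or.inl rfl) with h5 | h5
        · exact Or.inl h5.symm
        · exact Or.inr h5.symm
      · rcases (key _).mp (Or.inr rfl) with h5 | h5
        · exact Or.inl h5.symm
        · exact Or.inr h5.symm
    · rintro (rfl | rfl)
      · rcases (key _).mpr (Or.inl rfl) with h5 | h5
        · exact Or.inl h5.symm
        · exact Or.inr h5.symm
      · rcases (key _).mpr (Or.inr rfl) with h5 | h5
        · exact Or.inl h5.symm
        · exact Or.inr h5.symm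
  · intro h
    rw [← Finset.coe_inj] at h
    simp only [Finset.coe_insert, Finset.coe_singleton] at h
    rw [Set.pair_eq_pair_iff] at h
    rcases h with ⟨h1, h2⟩ | ⟨h1, h2⟩
    · unfold cPairF; rw [h1, h2]
    · unfold cPairF; rw [h1, h2]; exact sub_right_comm _ _ _

/-- the vector with class-coordinates `w` and zero `λ`, `δ_irr` coordinates. -/
def mkV {n : ℕ} (w : ClassRep n → ℚ) : Vsp n := Sum.elim 0 (Sum.elim 0 w)

lemma cIrrF_mkV {n : ℕ} (w : ClassRep n → ℚ) : cIrrF n (mkV w) = 0 := by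
  simp [cIrrF, pr, mkV, lamIdx, irrIdx]

lemma cPairF_mkV (g n : ℕ) (q : Pr n) (w : ClassRep n → ℚ) :
    cPairF g n q (mkV w) = -(w (cls g q) + w (cls g (succP q))) := by
  simp only [cPairF, LinearMap.sub_apply, LinearMap.add_apply, LinearMap.smul_apply, pr,
    LinearMap.proj_apply, mkV, lamIdx, irrIdx, clsIdx, Sum.elim_inl, Sum.elim_inr, Pi.zero_apply, smul_zero, zero_add]
  ring

end Aux
section Rank

open Classical in
lemma finrank_quot_iInf_ker {V : Type*} [AddCommGroup V] [Module ℚ V]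
    (s : Set (V →ₗ[ℚ] ℚ)) (hs : s.Finite)
    (hdual : ∀ φ0 ∈ s, ∃ v, ∀ φ ∈ s, φ v = if φ = φ0 then (1 : ℚ) else 0) :
    Module.finrank ℚ (V ⧸ ⨅ φ ∈ s, LinearMap.ker φ) = s.ncard := by
  classical
  haveI := hs.fintype
  set L : V →ₗ[ℚ] (s → ℚ) := LinearMap.pi fun φ : s => (φ : V →ₗ[ℚ] ℚ) with hL
  have hker : LinearMap.ker L = ⨅ φ ∈ s, LinearMap.ker φ := by
    rw [hL, LinearMap.ker_pi]
    rw [iInf_subtype]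
  have hsingle : ∀ φ0 : s, (Pi.single φ0 1 : s → ℚ) ∈ LinearMap.range L := by
    intro φ0
    obtain ⟨v, hv⟩ := hdual φ0.1 φ0.2
    refine ⟨v, ?_⟩
    funext φ
    have := hv φ.1 φ.2
    simp only [hL, LinearMap.pi_apply]
    rw [this, Pi.single_apply]
    congr 1
    simp [Subtype.ext_iff, eq_comm]
  have hsurj : Function.Surjective L := by
    intro x
    have hx : x ∈ LinearMap.range L := by
      have hxe : x = ∑ φ0 : s, x φ0 • (Pi.single φ0 1 : s → ℚ) := by
        funext ψ
        rw [Finset.sum_apply]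
        simp only [Pi.smul_apply, Pi.single_apply, smul_eq_mul, mul_ite, mul_one, mul_zero]
        rw [Finset.sum_ite_eq Finset.univ ψ (fun φ0 => x φ0)]
        simp
      rw [hxe]
      exact Submodule.sum_mem _ fun φ0 _ => Submodule.smul_mem _ _ (hsingle φ0)
    exact hx
  rw [← hker]
  rw [(L.quotKerEquivOfSurjective hsurj).finrank_eq, Module.finrank_fintype_fun_eq_card,
    Set.ncard_eq_toFinset_card', Set.toFinset_card]

end Rank
section Dual

open Classical in
lemma exists_dual (g n : ℕ) (p0 : Pr n) (h0 : ValidPair g n p0) :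
    ∃ v : Vsp n, cIrrF n v = 0 ∧ ∀ q : Pr n, ValidPair g n q →
      cPairF g n q v = if cPairF g n q = cPairF g n p0 then (1 : ℚ) else 0 := by
  classical
  obtain ⟨e0, I0⟩ := p0
  have hp0g : e0 + 1 ≤ g := h0.2.1.1
  have hsp0 : succP (e0, I0) = (e0 + 1, I0) := rfl
  by_cases hn0 : n = 0
  · -- folded case n = 0
    subst hn0
    have hemp : ∀ s : Finset (Fin 0), s = ∅ := fun s =>
      Finset.eq_empty_iff_forall_notMem.mpr (fun x _ => x.elim0)
    have clsB : ∀ a b : ℕ, a ≤ g → b ≤ g →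
        (cls g (a, (∅ : Finset (Fin 0))) = cls g (b, ∅) ↔ (a = b ∨ a = g - b)) := by
      intro a b ha hb
      rw [cls_eq_iff g ha hb]
      constructor
      · rintro (⟨h1, _⟩ | ⟨h1, _⟩)
        · exact Or.inl h1
        · exact Or.inr h1
      · rintro (h1 | h1)
        · exact Or.inl ⟨h1, rfl⟩
        · exact Or.inr ⟨h1, (hemp _).symm⟩
    have hbound : ∀ q : Pr 0, ValidPair g 0 q → 2 ≤ q.1 ∧ q.1 + 3 ≤ g := by
      intro q hq
      obtain ⟨a, J⟩ := q
      obtain ⟨⟨hs1, hs2, hs3⟩, ⟨ht1, ht2, ht3⟩, hc1, hc2⟩ := hq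
      have hJ : J = ∅ := hemp J
      subst hJ
      have huniv : (Finset.univ : Finset (Fin 0)) = ∅ := hemp _
      simp only [succP] at ht1 ht2 ht3
      rw [huniv] at hs3 ht3
      have ha0 : a ≠ 0 := fun h => hs2 (by rw [h])
      have hag : a ≠ g := fun h => hs3 (by rw [h])
      have hag1 : a + 1 ≠ g := fun h => ht3 (by rw [h])
      have hc1' : ¬(a = 1 ∨ a = g - 1) := fun h => hc1 ((clsB a 1 hs1 (by omega)).mpr h)
      have hc2' : ¬(a + 1 = 1 ∨ a + 1 = g - 1) := fun h => hc2 ((clsB (a+1) 1 ht1 (by omega)).mpr h)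
      push_neg at hc1' hc2'
      omega
    have hb0 := hbound (e0, I0) h0
    simp only at hb0
    rw [hemp I0] at h0 ⊢
    obtain ⟨m0, hm0def⟩ : ∃ m, m = min e0 (g - 1 - e0) := ⟨_, rfl⟩
    have hm0a : 2 ≤ m0 ∧ 2 * m0 ≤ g - 1 ∧ m0 ≤ g := by omega
    obtain ⟨cB, hcB⟩ : ∃ c : ℚ, c = if 2 * m0 = g - 1 then -(1/2) else -1 := ⟨_, rfl⟩
    set f : ℕ → ℚ := fun τ => if g ≤ 2 * τ ∨ m0 < τ then 0 else cB * (-1)^(m0 - τ) with hf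
    set w : ClassRep 0 → ℚ :=
      fun c => ∑ τ ∈ Finset.range (g+1), if cls g (τ, (∅ : Finset (Fin 0))) = c then f τ else 0
      with hw
    have hwB : ∀ e, e ≤ g → w (cls g (e, (∅ : Finset (Fin 0)))) = f (min e (g - e)) := by
      intro e he
      have hcongr : ∀ τ ∈ Finset.range (g+1),
          (if cls g (τ, (∅ : Finset (Fin 0))) = cls g (e, ∅) then f τ else 0)
            = if τ = e ∨ τ = g - e then f τ else 0 := by
        intro τ hτ
        have hτg : τ ≤ g := by have := Finset.mem_range.mp hτ; omega
        by_cases hc : τ = e ∨ τ = g - e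
        · rw [if_pos ((clsB τ e hτg he).mpr hc), if_pos hc]
        · rw [if_neg (fun h => hc ((clsB τ e hτg he).mp h)), if_neg hc]
      simp only [hw]
      rw [Finset.sum_congr rfl hcongr]
      by_cases hee : e = g - e
      · have hone : ∀ τ ∈ Finset.range (g+1),
            (if τ = e ∨ τ = g - e then f τ else 0) = if τ = e then f τ else 0 := by
          intro τ _
          rw [← hee]
          simp
        rw [Finset.sum_congr rfl hone, Finset.sum_ite_eq' (Finset.range (g+1)) e f,
          if_pos (Finset.mem_range.mpr (by omega)), show min e (g - e) = e by omega]
      · have hsplit : ∀ τ ∈ Finset.range (g+1), (if τ = e ∨ τ = g - e then f τ else 0)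
            = (if τ = e then f τ else 0) + (if τ = g - e then f τ else 0) := by
          intro τ _
          by_cases h1 : τ = e
          · subst h1; rw [if_pos (Or.inl rfl), if_pos rfl, if_neg hee]; ring
          · by_cases h4 : τ = g - e
            · subst h4; rw [if_pos (Or.inr rfl), if_neg h1, if_pos rfl]; ring
            · rw [if_neg (by tauto), if_neg h1, if_neg h4]; ring
        rw [Finset.sum_congr rfl hsplit, Finset.sum_add_distrib,
          Finset.sum_ite_eq' (Finset.range (g+1)) e f,
          Finset.sum_ite_eq' (Finset.range (g+1)) (g - e) f,
          if_pos (Finset.mem_range.mpr (by omega)), if_pos (Finset.mem_range.mpr (by omega))]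
        rcases Nat.lt_or_ge e (g - e) with hlt | hge
        · rw [min_eq_left (le_of_lt hlt)]
          have hz : f (g - e) = 0 := by
            simp only [hf]; rw [if_pos (Or.inl (by omega))]
          rw [hz]; ring
        · rw [min_eq_right (by omega)]
          have hz : f e = 0 := by
            simp only [hf]; rw [if_pos (Or.inl (by omega))]
          rw [hz]; ring
    have hfB1 : ∀ m, 2 * m + 2 ≤ g → f m + f (m+1) = if m = m0 then (-1 : ℚ) else 0 := by
      intro m hm
      rcases lt_trichotomy m m0 with h | h | h
      · have h1 : f m = cB * (-1)^(m0 - m) := by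
          simp only [hf]; rw [if_neg (by omega)]
        have h2 : f (m+1) = cB * (-1)^(m0 - (m+1)) := by
          simp only [hf]; rw [if_neg (by omega)]
        rw [h1, h2, show m0 - m = (m0 - (m+1)) + 1 by omega, pow_succ, if_neg (by omega)]
        ring
      · have h1 : f m = cB := by
          simp only [hf]
          rw [if_neg (by omega), show m0 - m = 0 by omega, pow_zero, mul_one]
        have h2 : f (m+1) = 0 := by
          simp only [hf]; rw [if_pos (Or.inr (by omega))]
        rw [h1, h2, if_pos h, hcB, if_neg (by omega)]
        ring
      · have h1 : f m = 0 := by simp only [hf]; rw [if_pos (Or.inr h)]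
        have h2 : f (m+1) = 0 := by simp only [hf]; rw [if_pos (Or.inr (by omega))]
        rw [h1, h2, if_neg (by omega)]; ring
    have hfB2 : ∀ e, 2 * e + 1 = g → 2 * f e = if e = m0 then (-1 : ℚ) else 0 := by
      intro e he2
      by_cases h : e = m0
      · have h1 : f e = cB := by
          simp only [hf]
          rw [if_neg (by omega), show m0 - e = 0 by omega, pow_zero, mul_one]
        rw [h1, hcB, if_pos (by omega), if_pos h]
        norm_num
      · have h1 : f e = 0 := by
          simp only [hf]; rw [if_pos (Or.inr (by omega))]
        rw [h1, if_neg h]; ring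
    refine ⟨mkV w, cIrrF_mkV w, ?_⟩
    rintro ⟨a, J⟩ hq
    have hJ : J = ∅ := hemp J
    rw [hJ] at hq ⊢
    have hbq := hbound (a, ∅) hq
    simp only at hbq
    rw [cPairF_mkV]
    have hsp : succP (a, (∅ : Finset (Fin 0))) = (a+1, ∅) := rfl
    rw [hsp, hwB a (by omega), hwB (a+1) (by omega)]
    have hiff : (cPairF g 0 (a, (∅ : Finset (Fin 0))) = cPairF g 0 (e0, ∅))
        ↔ min a (g - 1 - a) = m0 := by
      rw [cPairF_eq_iff, hsp, show succP (e0, (∅ : Finset (Fin 0))) = (e0+1, ∅) from rfl]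
      rw [← Finset.coe_inj]
      simp only [Finset.coe_insert, Finset.coe_singleton]
      rw [Set.pair_eq_pair_iff]
      constructor
      · rintro (⟨h1, h2⟩ | ⟨h1, h2⟩)
        · rcases (clsB a e0 (by omega) (by omega)).mp h1 with h3 | h3 <;>
            rcases (clsB (a+1) (e0+1) (by omega) (by omega)).mp h2 with h4 | h4 <;>
            omega
        · rcases (clsB a (e0+1) (by omega) (by omega)).mp h1 with h3 | h3 <;>
            rcases (clsB (a+1) e0 (by omega) (by omega)).mp h2 with h4 | h4 <;>
            omega
      · intro h
        rcases (by omega : a = e0 ∨ a = g - 1 - e0) with rfl | h2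
        · exact Or.inl ⟨rfl, rfl⟩
        · exact Or.inr ⟨(clsB a (e0+1) (by omega) (by omega)).mpr (Or.inr (by omega)),
            (clsB (a+1) e0 (by omega) (by omega)).mpr (Or.inr (by omega))⟩
    simp only [hiff]
    rcases (by omega : 2 * a + 2 ≤ g ∨ 2 * a + 1 = g ∨ g ≤ 2 * a) with hA | hB | hC
    · rw [show min a (g - a) = a by omega, show min (a+1) (g - (a+1)) = a + 1 by omega,
        show min a (g - 1 - a) = a by omega, hfB1 a (by omega)]
      split_ifs <;> norm_num
    · rw [show min a (g - a) = a by omega, show min (a+1) (g - (a+1)) = a by omega,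
        show min a (g - 1 - a) = a by omega]
      have h2f := hfB2 a (by omega)
      split_ifs at h2f ⊢ with hc
      · linarith
      · linarith
    · rw [show min a (g - a) = g - a by omega, show min (a+1) (g - (a+1)) = g - a - 1 by omega,
        show min a (g - 1 - a) = g - 1 - a by omega]
      have hkey := hfB1 (g - a - 1) (by omega)
      rw [show g - a - 1 + 1 = g - a by omega] at hkey
      rw [show g - 1 - a = g - a - 1 by omega,
        show (-(f (g - a) + f (g - a - 1)) : ℚ) = -(f (g - a - 1) + f (g - a)) by ring, hkey]
      split_ifs <;> norm_num
  · -- unfolded case n ≥ 1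
    have hI : I0ᶜ ≠ I0 := by
      intro h
      have hpos : 0 < n := Nat.pos_of_ne_zero hn0
      have hmem := Finset.mem_compl (s := I0) (a := (⟨0, hpos⟩ : Fin n))
      rw [h] at hmem
      tauto
    set f : ℕ → ℚ := fun τ => if τ ≤ e0 then 0 else (-1)^(τ - e0) with hf
    set w : ClassRep n → ℚ :=
      fun c => ∑ τ ∈ Finset.range (g+1), if cls g (τ, I0) = c then f τ else 0 with hw
    have hfA : ∀ e : ℕ, f e + f (e+1) = if e = e0 then (-1 : ℚ) else 0 := by
      intro e
      rcases lt_trichotomy e e0 with h | h | h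
      · simp only [hf]
        rw [if_pos (le_of_lt h), if_pos (by omega), if_neg (by omega)]
        norm_num
      · subst h
        simp only [hf]
        rw [if_pos le_rfl, if_neg (show ¬(e + 1 ≤ e) by omega),
          show e + 1 - e = 1 by omega, pow_one]
        simp
      · simp only [hf]
        rw [if_neg (by omega), if_neg (by omega), if_neg (by omega),
          show e + 1 - e0 = (e - e0) + 1 by omega, pow_succ]
        ring
    have hwA : ∀ e, e ≤ g → w (cls g (e, I0)) = f e := by
      intro e he
      have hcongr : ∀ τ ∈ Finset.range (g+1),
          (if cls g (τ, I0) = cls g (e, I0) then f τ else 0) = if τ = e then f τ else 0 := by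
        intro τ hτ
        have hτg : τ ≤ g := by have := Finset.mem_range.mp hτ; omega
        by_cases hc : τ = e
        · subst hc; simp
        · have hne : ¬(cls g (τ, I0) = cls g (e, I0)) := by
            intro hcls
            rcases (cls_eq_iff g hτg he).mp hcls with ⟨h1, _⟩ | ⟨_, h2⟩
            · exact hc h1
            · exact hI h2.symm
          rw [if_neg hne, if_neg hc]
      simp only [hw]
      rw [Finset.sum_congr rfl hcongr, Finset.sum_ite_eq' (Finset.range (g+1)) e f,
        if_pos (Finset.mem_range.mpr (by omega))]
    have hw0 : ∀ c : ClassRep n, (∀ τ, τ ≤ g → cls g (τ, I0) ≠ c) → w c = 0 := by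
      intro c hc
      simp only [hw]
      exact Finset.sum_eq_zero fun τ hτ =>
        if_neg (hc τ (by have := Finset.mem_range.mp hτ; omega))
    refine ⟨mkV w, cIrrF_mkV w, ?_⟩
    rintro ⟨a, J⟩ hq
    have hqg : a + 1 ≤ g := hq.2.1.1
    rw [cPairF_mkV]
    by_cases h2 : J = I0
    · rw [h2] at hq ⊢
      rw [show succP (a, I0) = (a+1, I0) from rfl, hwA a (by omega), hwA (a+1) (by omega)]
      have hiff : (cPairF g n (a, I0) = cPairF g n (e0, I0)) ↔ a = e0 := by
        constructor
        · intro h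
          rw [cPairF_eq_iff, show succP (a, I0) = (a+1, I0) from rfl, hsp0,
            ← Finset.coe_inj] at h
          simp only [Finset.coe_insert, Finset.coe_singleton] at h
          rw [Set.pair_eq_pair_iff] at h
          rcases h with ⟨h1, _⟩ | ⟨h1, h2'⟩
          · rcases (cls_eq_iff g (by omega) (by omega)).mp h1 with ⟨h3, _⟩ | ⟨_, h4⟩
            · exact h3
            · exact absurd h4.symm hI
          · rcases (cls_eq_iff g (by omega) (by omega)).mp h1 with ⟨h3, _⟩ | ⟨_, h4⟩
            · rcases (cls_eq_iff g (by omega) (by omega)).mp h2' with ⟨h5, _⟩ | ⟨_, h6⟩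
              · omega
              · exact absurd h6.symm hI
            · exact absurd h4.symm hI
        · rintro rfl; rfl
      simp only [hiff]
      rw [hfA a]
      split_ifs <;> norm_num
    · by_cases h3 : J = I0ᶜ
      · rw [h3] at hq ⊢
        have hea : g - a = (g - a - 1) + 1 := by omega
        have hm1 : cls g (a, I0ᶜ) = cls g ((g - a - 1) + 1, I0) := by
          rw [← hea]
          exact (cls_eq_iff g (by omega) (by omega)).mpr (Or.inr ⟨by omega, rfl⟩)
        have hm2 : cls g (succP (a, I0ᶜ)) = cls g (g - a - 1, I0) := by
          rw [show succP (a, I0ᶜ) = (a+1, I0ᶜ) from rfl]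
          exact (cls_eq_iff g (by omega) (by omega)).mpr (Or.inr ⟨by omega, rfl⟩)
        rw [hm1, hm2, hwA ((g - a - 1) + 1) (by omega), hwA (g - a - 1) (by omega)]
        have hiff : (cPairF g n (a, I0ᶜ) = cPairF g n (e0, I0)) ↔ g - a - 1 = e0 := by
          constructor
          · intro h
            rw [cPairF_eq_iff, hm1, hm2, hsp0, ← Finset.coe_inj] at h
            simp only [Finset.coe_insert, Finset.coe_singleton] at h
            rw [Set.pair_eq_pair_iff] at h
            rcases h with ⟨h1, h2'⟩ | ⟨h1, _⟩
            · rcases (cls_eq_iff g (by omega) (by omega)).mp h1 with ⟨h4, _⟩ | ⟨_, h4c⟩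
              · rcases (cls_eq_iff g (by omega) (by omega)).mp h2' with ⟨h5, _⟩ | ⟨_, h5c⟩
                · omega
                · exact absurd h5c.symm hI
              · exact absurd h4c.symm hI
            · rcases (cls_eq_iff g (by omega) (by omega)).mp h1 with ⟨h4, _⟩ | ⟨_, h4c⟩
              · omega
              · exact absurd h4c.symm hI
          · intro h
            rw [cPairF_eq_iff, hm1, hm2, hsp0, h]
            exact Finset.pair_comm _ _
        simp only [hiff]
        rw [show (-(f ((g - a - 1) + 1) + f (g - a - 1)) : ℚ)
            = -(f (g - a - 1) + f ((g - a - 1) + 1)) by ring, hfA (g - a - 1)]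
        split_ifs <;> norm_num
      · have hz : ∀ b : ℕ, b ≤ g → w (cls g (b, J)) = 0 := by
          intro b hb
          refine hw0 _ (fun τ hτ hcls => ?_)
          rcases (cls_eq_iff g hτ hb).mp hcls with ⟨_, h4⟩ | ⟨_, h4⟩
          · exact h2 h4.symm
          · exact h3 (by rw [h4, compl_compl])
        rw [show succP (a, J) = (a+1, J) from rfl, hz a (by omega), hz (a+1) (by omega)]
        have hne : ¬(cPairF g n (a, J) = cPairF g n (e0, I0)) := by
          intro h
          rw [cPairF_eq_iff] at h
          have hmem : cls g (a, J)
              ∈ ({cls g (e0, I0), cls g (succP (e0, I0))} : Finset (ClassRep n)) := by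
            rw [← h]; exact Finset.mem_insert_self _ _
          rw [hsp0] at hmem
          rcases Finset.mem_insert.mp hmem with h5 | h5
          · rcases (cls_eq_iff g (by omega) (by omega)).mp h5 with ⟨_, h6⟩ | ⟨_, h6⟩
            · exact h2 h6
            · exact h3 h6
          · rw [Finset.mem_singleton] at h5
            rcases (cls_eq_iff g (by omega) (by omega)).mp h5 with ⟨_, h6⟩ | ⟨_, h6⟩
            · exact h2 h6
            · exact h3 h6
        rw [if_neg hne]
        norm_num

end Dual
section Count

open Classical in
/-- Recover the minimal subset from a bridge functional. -/
noncomputable def Psi (g n : ℕ) : (Vsp n →ₗ[ℚ] ℚ) → Set (Option (ClassRep n)) := fun φ =>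
  if φ = cIrrF n then {none} else {x | ∃ c : ClassRep n, x = some c ∧ φ (bv (clsIdx c)) ≠ 0}

lemma Psi_irr (g n : ℕ) : Psi g n (cIrrF n) = {none} := by
  simp [Psi]

lemma Psi_pair (g n : ℕ) (p : Pr n) :
    Psi g n (cPairF g n p) = {some (cls g p), some (cls g (succP p))} := by
  classical
  simp only [Psi]
  rw [if_neg (cPairF_ne_cIrrF g n p)]
  ext x
  simp only [Set.mem_setOf_eq, Set.mem_insert_iff, Set.mem_singleton_iff]
  constructor
  · rintro ⟨c, rfl, hne⟩
    rw [cPairF_bv_cls] at hne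
    by_cases h1 : cls g p = c
    · exact Or.inl (by rw [h1])
    · by_cases h2 : cls g (succP p) = c
      · exact Or.inr (by rw [h2])
      · rw [if_neg h1, if_neg h2] at hne; norm_num at hne
  · rintro (rfl | rfl)
    · refine ⟨cls g p, rfl, ?_⟩
      rw [cPairF_bv_cls, if_pos (rfl : cls g p = cls g p)]
      split_ifs <;> norm_num
    · refine ⟨cls g (succP p), rfl, ?_⟩
      rw [cPairF_bv_cls, if_pos (rfl : cls g (succP p) = cls g (succP p))]
      split_ifs <;> norm_num

lemma FT_finite (g n : ℕ) (T : Set (Option (ClassRep n))) : (FT g n T).Finite := by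
  have hsub : FT g n T ⊆ insert (cIrrF n) ((fun p => cPairF g n p) '' {p : Pr n | p.1 ≤ g}) := by
    rintro φ (⟨_, rfl⟩ | ⟨p, hp, _, _, rfl⟩)
    · exact Set.mem_insert _ _
    · exact Set.mem_insert_of_mem _ ⟨p, hp.1.1, rfl⟩
  have hfin : ({p : Pr n | p.1 ≤ g}).Finite := by
    have hsub2 : {p : Pr n | p.1 ≤ g} ⊆ (Set.Iic g) ×ˢ (Set.univ : Set (Finset (Fin n))) := by
      rintro ⟨a, J⟩ h
      exact ⟨h, trivial⟩
    exact Set.Finite.subset ((Set.finite_Iic g).prod Set.finite_univ) hsub2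
  exact ((hfin.image _).insert _).subset hsub

end Count
/-- For `g ≥ 3` and `T ⊆ T_{g,n}`, the subspace of `T`-compatible
vectors of `V` — the common kernel of the elliptic bridge functionals `c_t` for all
bridge types `t` contained in `T` — has codimension in `V` equal to the number of
minimal subsets of `T_{g,n}` contained in `T`. -/
theorem stmt14 (g n : ℕ) (hg : 3 ≤ g) (T : Set (Option (ClassRep n)))
    (hT : T ⊆ TgnSet g n) :
    Module.finrank ℚ (Vsp n ⧸ (⨅ φ ∈ FT g n T, LinearMap.ker φ)) =
      Set.ncard {M : Set (Option (ClassRep n)) | IsMinimal g n M ∧ M ⊆ T} := by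
  classical
  have hdual : ∀ φ0 ∈ FT g n T, ∃ v, ∀ φ ∈ FT g n T, φ v = if φ = φ0 then (1 : ℚ) else 0 := by
    rintro φ0 (⟨⟨hg2, hT0⟩, rfl⟩ | ⟨p0, hvp0, hT1, hT2, rfl⟩)
    · refine ⟨(fun i => if i = lamIdx n then (6 : ℚ) else if i = irrIdx n then -(1/2) else 0), ?_⟩
      rintro φ (⟨_, rfl⟩ | ⟨q, hq, _, _, rfl⟩)
      · rw [if_pos (rfl : cIrrF n = cIrrF n)]
        simp [cIrrF, pr, lamIdx, irrIdx]
        norm_num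
      · rw [if_neg (cPairF_ne_cIrrF g n q)]
        simp [cPairF, pr, lamIdx, irrIdx, clsIdx]
        norm_num
    · obtain ⟨v, hv1, hv2⟩ := exists_dual g n p0 hvp0
      refine ⟨v, ?_⟩
      rintro φ (⟨_, rfl⟩ | ⟨q, hq, _, _, rfl⟩)
      · rw [hv1, if_neg (fun h => cPairF_ne_cIrrF g n p0 h.symm)]
      · exact hv2 q hq
  rw [finrank_quot_iInf_ker (FT g n T) (FT_finite g n T) hdual]
  have himg : Psi g n '' (FT g n T)
      = {M : Set (Option (ClassRep n)) | IsMinimal g n M ∧ M ⊆ T} := by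
    ext M
    constructor
    · rintro ⟨φ, hφ, rfl⟩
      rcases hφ with ⟨⟨hg2, hT0⟩, rfl⟩ | ⟨p, hp, hT1, hT2, rfl⟩
      · rw [Psi_irr]
        exact ⟨Or.inl ⟨hg2, rfl⟩, by simpa using hT0⟩
      · rw [Psi_pair]
        refine ⟨Or.inr ⟨p, hp, rfl⟩, ?_⟩
        rw [Set.insert_subset_iff, Set.singleton_subset_iff]
        exact ⟨hT1, hT2⟩
    · rintro ⟨hmin, hsub⟩
      rcases hmin with ⟨hg2, rfl⟩ | ⟨p, hp, rfl⟩
      · exact ⟨cIrrF n, Or.inl ⟨⟨hg2, hsub rfl⟩, rfl⟩, Psi_irr g n⟩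
      · exact ⟨cPairF g n p, Or.inr ⟨p, hp, hsub (Set.mem_insert _ _),
          hsub (Set.mem_insert_of_mem _ rfl), rfl⟩, Psi_pair g n p⟩
  have hinj : Set.InjOn (Psi g n) (FT g n T) := by
    rintro φ1 h1 φ2 h2 hΨ
    rcases h1 with ⟨_, rfl⟩ | ⟨p, hp, _, _, rfl⟩ <;> rcases h2 with ⟨_, rfl⟩ | ⟨q, hq, _, _, rfl⟩
    · rfl
    · exfalso
      rw [Psi_irr, Psi_pair] at hΨ
      have hmm : (none : Option (ClassRep n))
          ∈ ({some (cls g q), some (cls g (succP q))} : Set (Option (ClassRep n))) := by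
        rw [← hΨ]; rfl
      simp at hmm
    · exfalso
      rw [Psi_irr, Psi_pair] at hΨ
      have hmm : (none : Option (ClassRep n))
          ∈ ({some (cls g p), some (cls g (succP p))} : Set (Option (ClassRep n))) := by
        rw [hΨ]; rfl
      simp at hmm
    · rw [Psi_pair, Psi_pair, Set.pair_eq_pair_iff] at hΨ
      rw [cPairF_eq_iff]
      rcases hΨ with ⟨ha, hb⟩ | ⟨ha, hb⟩
      · rw [Option.some_inj] at ha hb
        rw [ha, hb]
      · rw [Option.some_inj] at ha hb
        rw [ha, hb]
        exact Finset.pair_comm _ _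
  rw [← himg, Set.ncard_image_of_injOn hinj]

end CTV
end
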